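/- Let m and n be natural numbers with m positive and even and n ≥ 1, and let s be an integer such that m divides s^n − 1 (hence m also divides (s+m)^n − 1). Then the integers (s^n − 1)/m and ((s+m)^n − 1)/m have the same parity (are congruent modulo 2) if and only if n is even. -/
import Mathlib

lemma key_aux (m s : ℤ) (hs : s % 2 = 1) (hm : m % 2 = 0) :
    ∀ n : ℕ, ∃ t : ℤ, (s + m) ^ n = s ^ n + m * t ∧ t % 2 = (n : ℤ) % 2 := by
  intro n
  induction n with
  | zero => exact ⟨0, by ring, by norm_num⟩
  | succ n ih =>
    obtain ⟨t, ht, htm⟩ := ih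
    refine ⟨s ^ n + t * s + m * t, ?_, ?_⟩
    · rw [pow_succ, ht]; ring
    · have h1 : s ^ n % 2 = 1 := by
        have : Odd s := by
          rcases Int.even_or_odd s with h | h
          · exfalso; obtain ⟨k, hk⟩ := h; omega
          · exact h
        obtain ⟨k, hk⟩ := this.pow (n := n); omega
      have h2 : (t * s) % 2 = t % 2 := by
        conv_lhs => rw [Int.mul_emod, hs]
        simp [Int.emod_emod_of_dvd]
      have h3 : (m * t) % 2 = 0 := by
        rw [Int.mul_emod, hm]; simp
      omega

theorem stmt_14 (m n : ℕ) (hm : 0 < m) (hme : Even m) (hn : 1 ≤ n) (s : ℤ)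
    (hd : (m : ℤ) ∣ s ^ n - 1) :
    (s ^ n - 1) / (m : ℤ) % 2 = ((s + m) ^ n - 1) / (m : ℤ) % 2 ↔ Even n := by
  have hm2 : (m : ℤ) % 2 = 0 := by
    obtain ⟨k, hk⟩ := hme; subst hk; push_cast; omega
  have hs : s % 2 = 1 := by
    have h2 : (2 : ℤ) ∣ s ^ n - 1 := dvd_trans (by omega) hd
    have hodd : Odd (s ^ n) := by
      rcases Int.even_or_odd (s ^ n) with h | h
      · exfalso; obtain ⟨k, hk⟩ := h; omega
      · exact h
    have : Odd s := by
      rcases Int.odd_pow.mp hodd with h | h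
      · exact h
      · omega
    obtain ⟨k, hk⟩ := this; omega
  obtain ⟨t, ht, htm⟩ := key_aux (m : ℤ) s hs hm2 n
  have hmz : (m : ℤ) ≠ 0 := by positivity
  have heq : ((s + m) ^ n - 1) / (m : ℤ) = (s ^ n - 1) / (m : ℤ) + t := by
    rw [ht, show s ^ n + (m : ℤ) * t - 1 = (s ^ n - 1) + t * m by ring,
      Int.add_mul_ediv_right _ _ hmz]
  rw [heq]
  have hne : Even n ↔ (n : ℤ) % 2 = 0 := by
    rw [Int.even_iff (n := (n : ℤ)) |>.symm]; exact (Int.even_coe_nat n).symm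
  rw [hne]
  omega
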